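/- arXiv:1911.04727 — 2 statements merged into one kernel-verified Lean document; each statement's English description precedes it below -/
import Mathlib

section
/- Let ς be a d-inflator on K. If α ∈ K specializes to φ ∈ End_R(M) and α′ ∈ K specializes to φ′ ∈ End_R(M), then the product α·α′ specializes to the composition φ ∘ φ′. -/
/-- The length of a module, as the Krull dimension of its submodule lattice. -/
noncomputable def moduleLength (R M : Type*) [Ring R] [AddCommGroup M] [Module R M] :
    WithBot ℕ∞ :=
  Order.krullDim (Submodule R M)

/-- The "direct sum" of a submodule of `Fin n → N` and a submodule of `Fin m → N`,
as a submodule of `Fin (n+m) → N`, under the standard identification. -/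
def Submodule.finDSum {S N : Type*} [Ring S] [AddCommGroup N] [Module S N] {n m : ℕ}
    (V : Submodule S (Fin n → N)) (W : Submodule S (Fin m → N)) :
    Submodule S (Fin (n + m) → N) where
  carrier := {x | (fun i => x (Fin.castAdd m i)) ∈ V ∧ (fun j => x (Fin.natAdd n j)) ∈ W}
  add_mem' := by
    rintro x y ⟨hx1, hx2⟩ ⟨hy1, hy2⟩
    exact ⟨V.add_mem hx1 hy1, W.add_mem hx2 hy2⟩
  zero_mem' := ⟨V.zero_mem, W.zero_mem⟩
  smul_mem' := by
    rintro c x ⟨hx1, hx2⟩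
    exact ⟨V.smul_mem c hx1, W.smul_mem c hx2⟩

/-- The coordinatewise action of a `K₀`-matrix on `Fin m → N`, where `N` carries commuting
`K₀`- and `S`-actions, as an `S`-linear map. -/
def matVec {K₀ S N : Type*} [CommRing K₀] [Ring S] [AddCommGroup N] [Module S N]
    [Module K₀ N] [SMulCommClass K₀ S N] {n m : ℕ}
    (μ : Matrix (Fin n) (Fin m) K₀) : (Fin m → N) →ₗ[S] (Fin n → N) where
  toFun x := fun i => ∑ j, μ i j • x j
  map_add' x y := by
    funext i
    simp [smul_add, Finset.sum_add_distrib]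
  map_smul' c x := by
    funext i
    simp only [Pi.smul_apply, RingHom.id_apply, Finset.smul_sum]
    exact Finset.sum_congr rfl fun j _ => smul_comm _ _ _

/-- The graph `{(x, a·x) : x ∈ K}` as a `K`-subspace of `K² = Fin 2 → K`. -/
def graphK (K : Type*) [Field K] (a : K) : Submodule K (Fin 2 → K) where
  carrier := {v | v 1 = a * v 0}
  add_mem' := by
    intro x y hx hy
    simp only [Set.mem_setOf_eq, Pi.add_apply] at *
    rw [hx, hy]; ring
  zero_mem' := by simp
  smul_mem' := by
    intro c x hx
    simp only [Set.mem_setOf_eq, Pi.smul_apply, smul_eq_mul] at *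
    rw [hx]; ring

/-- The graph `{(u, φ(u)) : u ∈ M}` of an endomorphism, as an `R`-submodule of `M²`. -/
def graphM {R M : Type*} [Ring R] [AddCommGroup M] [Module R M] (φ : Module.End R M) :
    Submodule R (Fin 2 → M) where
  carrier := {v | v 1 = φ (v 0)}
  add_mem' := by
    intro x y hx hy
    simp only [Set.mem_setOf_eq, Pi.add_apply] at *
    rw [hx, hy, map_add]
  zero_mem' := by simp
  smul_mem' := by
    intro c x hx
    simp only [Set.mem_setOf_eq, Pi.smul_apply] at *
    rw [hx, map_smul]

/-- A `d`-inflator on `K`, with target the pair `(R, M)`. -/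
structure Inflator (K₀ K R M : Type*) [Field K₀] [Field K] [Algebra K₀ K]
    [Ring R] [Algebra K₀ R] [AddCommGroup M] [Module R M] [Module K₀ M]
    [SMulCommClass K₀ R M] (d : ℕ) where
  ς : ∀ n : ℕ, Submodule K (Fin n → K) → Submodule R (Fin n → M)
  mono : ∀ (n : ℕ) (V W : Submodule K (Fin n → K)), V ≤ W → ς n V ≤ ς n W
  map_dsum : ∀ (n m : ℕ) (V : Submodule K (Fin n → K)) (W : Submodule K (Fin m → K)),
    ς (n + m) (V.finDSum W) = (ς n V).finDSum (ς m W)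
  equivariant : ∀ (n : ℕ) (μ : Matrix (Fin n) (Fin n) K₀), IsUnit μ →
    ∀ V : Submodule K (Fin n → K),
      ς n (V.map (matVec (S := K) (N := K) μ)) = (ς n V).map (matVec (S := R) (N := M) μ)
  length_eq : ∀ (n : ℕ) (V : Submodule K (Fin n → K)),
    moduleLength R (ς n V) = ((d * Module.finrank K V : ℕ) : ℕ∞)

namespace Inflator

variable {K₀ K R M : Type*} [Field K₀] [Field K] [Algebra K₀ K]
    [Ring R] [Algebra K₀ R] [AddCommGroup M] [Module R M] [Module K₀ M]
    [SMulCommClass K₀ R M] {d : ℕ}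

/-- `a ∈ K` specializes to the endomorphism `φ` of `M`. -/
def Specializes (I : Inflator K₀ K R M d) (a : K) (φ : Module.End R M) : Prop :=
  I.ς 2 (graphK K a) = graphM φ

/-- The fundamental ring of an inflator, as a subset of `K`. -/
def fundSet (I : Inflator K₀ K R M d) : Set K :=
  {a | ∃ φ : Module.End R M, I.Specializes a φ}

/-- The fundamental ideal of an inflator, as a subset of `K`. -/
def fundIdealSet (I : Inflator K₀ K R M d) : Set K :=
  {a | I.Specializes a 0}

end Inflator

section AuxLength

open Order

variable {R₁ Q Q' : Type*} [Ring R₁] [AddCommGroup Q] [Module R₁ Q]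
  [AddCommGroup Q'] [Module R₁ Q']

lemma moduleLength_eq_of_equiv (e : Q ≃ₗ[R₁] Q') :
    moduleLength R₁ Q = moduleLength R₁ Q' :=
  Order.krullDim_eq_of_orderIso (Submodule.orderIsoMapComap e)

lemma krullDim_exists_ltSeries {α : Type*} [Preorder α] [Nonempty α] {k : ℕ}
    (h : Order.krullDim α = ((k : ℕ∞) : WithBot ℕ∞)) :
    ∃ p : LTSeries α, p.length = k := by
  rw [Order.krullDim_eq_iSup_length] at h
  have h' : (⨆ p : LTSeries α, (p.length : ℕ∞)) = (k : ℕ∞) := by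
    exact_mod_cast h
  have hlt : (⨆ p : LTSeries α, (p.length : ℕ∞)) < ⊤ := by
    rw [h']; exact ENat.coe_lt_top k
  obtain ⟨p, hp⟩ := ENat.exists_eq_iSup_of_lt_top hlt
  refine ⟨p, ?_⟩
  have : (p.length : ℕ∞) = (k : ℕ∞) := by rw [hp, h']
  exact_mod_cast this

lemma submodule_eq_of_le_of_moduleLength {N P : Submodule R₁ Q} (hle : N ≤ P) {k : ℕ}
    (hN : moduleLength R₁ N = ((k : ℕ∞) : WithBot ℕ∞))
    (hP : moduleLength R₁ P = ((k : ℕ∞) : WithBot ℕ∞)) : N = P := by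
  by_contra hne
  have hlt : N < P := lt_of_le_of_ne hle hne
  obtain ⟨x, hxP, hxN⟩ := SetLike.exists_of_lt hlt
  set f : Submodule R₁ N → Submodule R₁ P := fun S => S.map (Submodule.inclusion hle) with hf
  have hmono : Monotone f := fun _ _ h => Submodule.map_mono h
  have hinj : Function.Injective f :=
    Submodule.map_injective_of_injective (Submodule.inclusion_injective hle)
  have hstrict : StrictMono f := hmono.strictMono_of_injective hinj
  obtain ⟨p, hp⟩ := krullDim_exists_ltSeries (α := Submodule R₁ N) hN
  have hne_top : ∀ S : Submodule R₁ N, f S < ⊤ := by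
    intro S
    refine lt_top_iff_ne_top.mpr ?_
    intro htop
    have : (⟨x, hxP⟩ : P) ∈ f S := htop ▸ Submodule.mem_top
    obtain ⟨y, -, hy⟩ := this
    have : (y : Q) = x := congrArg Subtype.val hy
    exact hxN (this ▸ y.2)
  set q : LTSeries (Submodule R₁ P) := (p.map f hstrict).snoc ⊤ (by
    rw [LTSeries.last_map]; exact hne_top _) with hq
  have hqlen : ((q.length : ℕ∞) : WithBot ℕ∞) ≤ moduleLength R₁ P :=
    LTSeries.length_le_krullDim q
  have hql : q.length = k + 1 := by
    simp [hq, hp]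
  rw [hql, hP] at hqlen
  have : (k : ℕ) + 1 ≤ k := by exact_mod_cast hqlen
  omega

end AuxLength

section AuxGraphs

lemma Submodule.mem_finDSum_iff {S N : Type*} [Ring S] [AddCommGroup N] [Module S N] {n m : ℕ}
    (V : Submodule S (Fin n → N)) (W : Submodule S (Fin m → N)) (x : Fin (n + m) → N) :
    x ∈ V.finDSum W ↔
      (fun i => x (Fin.castAdd m i)) ∈ V ∧ (fun j => x (Fin.natAdd n j)) ∈ W :=
  Iff.rfl

lemma mem_graphK_iff {K : Type*} [Field K] (a : K) (v : Fin 2 → K) :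
    v ∈ graphK K a ↔ v 1 = a * v 0 := Iff.rfl

lemma mem_graphM_iff {R M : Type*} [Ring R] [AddCommGroup M] [Module R M]
    (φ : Module.End R M) (v : Fin 2 → M) :
    v ∈ graphM φ ↔ v 1 = φ (v 0) := Iff.rfl

/-- The graph of `a` is isomorphic to `K`. -/
noncomputable def graphKEquiv (K : Type*) [Field K] (a : K) : (graphK K a) ≃ₗ[K] K where
  toFun v := v.1 0
  map_add' _ _ := rfl
  map_smul' _ _ := rfl
  invFun x := ⟨![x, a * x], by simp [mem_graphK_iff]⟩
  left_inv v := by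
    apply Subtype.ext
    funext i
    fin_cases i
    · rfl
    · simpa using v.2.symm
  right_inv x := rfl

/-- The graph of `φ` is isomorphic to `M`. -/
noncomputable def graphMEquiv {R M : Type*} [Ring R] [AddCommGroup M] [Module R M]
    (φ : Module.End R M) : (graphM φ) ≃ₗ[R] M where
  toFun v := v.1 0
  map_add' _ _ := rfl
  map_smul' _ _ := rfl
  invFun u := ⟨![u, φ u], by simp [mem_graphM_iff]⟩
  left_inv v := by
    apply Subtype.ext
    funext i
    fin_cases i
    · rfl
    · simpa using v.2.symm
  right_inv u := rfl

/-- The line `{(x, bx, cx)}` in `K³`. -/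
def tripleK (K : Type*) [Field K] (b c : K) : Submodule K (Fin 3 → K) where
  carrier := {x | x 1 = b * x 0 ∧ x 2 = c * x 0}
  add_mem' := by
    rintro x y ⟨hx1, hx2⟩ ⟨hy1, hy2⟩
    constructor <;> simp only [Pi.add_apply, hx1, hx2, hy1, hy2] <;> ring
  zero_mem' := by simp
  smul_mem' := by
    rintro t x ⟨hx1, hx2⟩
    constructor <;> simp only [Pi.smul_apply, smul_eq_mul, hx1, hx2] <;> ring

lemma mem_tripleK_iff {K : Type*} [Field K] (b c : K) (x : Fin 3 → K) :
    x ∈ tripleK K b c ↔ x 1 = b * x 0 ∧ x 2 = c * x 0 := Iff.rfl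

/-- The "graph" `{(u, φu, ψu)}` in `M³`. -/
def tripleM {R M : Type*} [Ring R] [AddCommGroup M] [Module R M]
    (φ ψ : Module.End R M) : Submodule R (Fin 3 → M) where
  carrier := {u | u 1 = φ (u 0) ∧ u 2 = ψ (u 0)}
  add_mem' := by
    rintro x y ⟨hx1, hx2⟩ ⟨hy1, hy2⟩
    constructor <;> simp only [Pi.add_apply, hx1, hx2, hy1, hy2, map_add]
  zero_mem' := by simp
  smul_mem' := by
    rintro t x ⟨hx1, hx2⟩
    constructor <;> simp only [Pi.smul_apply, hx1, hx2, map_smul]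

lemma mem_tripleM_iff {R M : Type*} [Ring R] [AddCommGroup M] [Module R M]
    (φ ψ : Module.End R M) (u : Fin 3 → M) :
    u ∈ tripleM φ ψ ↔ u 1 = φ (u 0) ∧ u 2 = ψ (u 0) := Iff.rfl

noncomputable def tripleKEquiv (K : Type*) [Field K] (b c : K) : (tripleK K b c) ≃ₗ[K] K where
  toFun v := v.1 0
  map_add' _ _ := rfl
  map_smul' _ _ := rfl
  invFun x := ⟨![x, b * x, c * x], by constructor <;> simp⟩
  left_inv v := by
    apply Subtype.ext
    funext i
    fin_cases i
    · rfl
    · simpa using v.2.1.symm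
    · simpa using v.2.2.symm
  right_inv x := rfl

noncomputable def tripleMEquiv {R M : Type*} [Ring R] [AddCommGroup M] [Module R M]
    (φ ψ : Module.End R M) : (tripleM φ ψ) ≃ₗ[R] M where
  toFun v := v.1 0
  map_add' _ _ := rfl
  map_smul' _ _ := rfl
  invFun u := ⟨![u, φ u, ψ u], by constructor <;> simp⟩
  left_inv v := by
    apply Subtype.ext
    funext i
    fin_cases i
    · rfl
    · simpa using v.2.1.symm
    · simpa using v.2.2.symm
  right_inv u := rfl

end AuxGraphs
section AuxSwap

/-- The transposition of coordinates 1 and 2 on `Fin 3`. -/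
def sw3 : Fin 3 → Fin 3 := ![0, 2, 1]

@[simp] lemma sw3_sw3 (i : Fin 3) : sw3 (sw3 i) = i := by fin_cases i <;> rfl

/-- The permutation matrix swapping coordinates 1 and 2. -/
def swapMat (K₀ : Type*) [CommRing K₀] : Matrix (Fin 3) (Fin 3) K₀ :=
  fun i j => if j = sw3 i then 1 else 0

lemma swapMat_mul_self (K₀ : Type*) [CommRing K₀] : swapMat K₀ * swapMat K₀ = 1 := by
  ext i j
  rw [Matrix.mul_apply]
  simp only [swapMat, ite_mul, one_mul, zero_mul, Finset.sum_ite_eq', Finset.mem_univ, if_true,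
    Matrix.one_apply, sw3_sw3]
  exact if_congr (by constructor <;> exact fun h => h.symm) rfl rfl

lemma isUnit_swapMat (K₀ : Type*) [CommRing K₀] : IsUnit (swapMat K₀) :=
  ⟨⟨swapMat K₀, swapMat K₀, swapMat_mul_self K₀, swapMat_mul_self K₀⟩, rfl⟩

lemma matVec_swapMat_apply {K₀ S N : Type*} [CommRing K₀] [Ring S] [AddCommGroup N] [Module S N]
    [Module K₀ N] [SMulCommClass K₀ S N] (x : Fin 3 → N) :
    matVec (S := S) (N := N) (swapMat K₀) x = fun i => x (sw3 i) := by
  funext i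
  show (∑ j, (if j = sw3 i then (1 : K₀) else 0) • x j) = x (sw3 i)
  simp [ite_smul]

lemma matVec_swapMat_invol {K₀ S N : Type*} [CommRing K₀] [Ring S] [AddCommGroup N] [Module S N]
    [Module K₀ N] [SMulCommClass K₀ S N] (x : Fin 3 → N) :
    matVec (S := S) (N := N) (swapMat K₀) (matVec (S := S) (N := N) (swapMat K₀) x) = x := by
  rw [matVec_swapMat_apply, matVec_swapMat_apply]
  funext i
  simp

lemma mem_map_swapMat_iff {K₀ S N : Type*} [CommRing K₀] [Ring S] [AddCommGroup N] [Module S N]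
    [Module K₀ N] [SMulCommClass K₀ S N] (V : Submodule S (Fin 3 → N)) (x : Fin 3 → N) :
    x ∈ V.map (matVec (S := S) (N := N) (swapMat K₀)) ↔
      matVec (S := S) (N := N) (swapMat K₀) x ∈ V := by
  constructor
  · rintro ⟨y, hy, rfl⟩
    rwa [matVec_swapMat_invol]
  · intro hmem
    exact ⟨_, hmem, matVec_swapMat_invol x⟩

end AuxSwap
/-- If `α` specializes to `φ` and `α′` specializes to `φ′` under a `d`-inflator, then
`α·α′` specializes to the composition `φ ∘ φ′`. -/
theorem specializes_mul
    {K₀ K R M : Type*} [Field K₀] [Infinite K₀] [Field K] [Algebra K₀ K]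
    [Ring R] [Algebra K₀ R] [AddCommGroup M] [Module R M] [Module K₀ M]
    [SMulCommClass K₀ R M] {d : ℕ} (hd : 1 ≤ d) [IsSemisimpleModule R M]
    (hM : moduleLength R M = ((d : ℕ∞) : WithBot ℕ∞))
    (I : Inflator K₀ K R M d) (α α' : K) (φ φ' : Module.End R M)
    (h : I.Specializes α φ) (h' : I.Specializes α' φ') :
    I.Specializes (α * α') (φ * φ') := by
  classical
  have hlenM2 : ∀ ψ : Module.End R M,
      moduleLength R (graphM ψ) = ((d : ℕ∞) : WithBot ℕ∞) := fun ψ =>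
    (moduleLength_eq_of_equiv (graphMEquiv ψ)).trans hM
  have hlenM3 : ∀ ψ ψ' : Module.End R M,
      moduleLength R (tripleM ψ ψ') = ((d : ℕ∞) : WithBot ℕ∞) := fun ψ ψ' =>
    (moduleLength_eq_of_equiv (tripleMEquiv ψ ψ')).trans hM
  -- `ς 1 ⊤ = ⊤`
  have htop1 : I.ς 1 (⊤ : Submodule K (Fin 1 → K)) = ⊤ := by
    refine submodule_eq_of_le_of_moduleLength (k := d) le_top ?_ ?_
    · have hlen := I.length_eq 1 ⊤
      have hfr : Module.finrank K (⊤ : Submodule K (Fin 1 → K)) = 1 := by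
        rw [finrank_top]
        exact Module.finrank_fin_fun K
      rw [hfr, mul_one] at hlen
      exact hlen
    · have e : (⊤ : Submodule R (Fin 1 → M)) ≃ₗ[R] M :=
        Submodule.topEquiv.trans (LinearEquiv.funUnique (Fin 1) R M)
      exact (moduleLength_eq_of_equiv e).trans hM
  set Θa := graphK K (α * α') with hΘa
  set D := tripleK K α' (α * α') with hDdef
  set E := tripleM φ' (φ * φ') with hEdef
  -- images of the two coordinate planes
  have hA : I.ς 3 ((graphK K α').finDSum (⊤ : Submodule K (Fin 1 → K)))
      = (graphM φ').finDSum (⊤ : Submodule R (Fin 1 → M)) := by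
    have hh := I.map_dsum 2 1 (graphK K α') ⊤
    rwa [h', htop1] at hh
  have hB : I.ς 3 ((⊤ : Submodule K (Fin 1 → K)).finDSum (graphK K α))
      = (⊤ : Submodule R (Fin 1 → M)).finDSum (graphM φ) := by
    have hh := I.map_dsum 1 2 ⊤ (graphK K α)
    rwa [h, htop1] at hh
  -- D is contained in both planes
  have hDA : D ≤ (graphK K α').finDSum (⊤ : Submodule K (Fin 1 → K)) := by
    intro x hx
    obtain ⟨h1, h2⟩ := hx
    exact ⟨h1, trivial⟩
  have hDB : D ≤ (⊤ : Submodule K (Fin 1 → K)).finDSum (graphK K α) := by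
    intro x hx
    obtain ⟨h1, h2⟩ := hx
    have hx2 : x 2 = α * x 1 := by rw [h2, h1]; ring
    exact ⟨trivial, hx2⟩
  -- hence `ς 3 D ≤ E`, and equality by lengths
  have hςD_le_E : I.ς 3 D ≤ E := by
    intro u hu
    have huA := I.mono 3 _ _ hDA hu
    have huB := I.mono 3 _ _ hDB hu
    rw [hA] at huA
    rw [hB] at huB
    obtain ⟨hu1, -⟩ := huA
    obtain ⟨-, hu2⟩ := huB
    have h12 : u 1 = φ' (u 0) := hu1
    have h23 : u 2 = φ (u 1) := hu2
    refine ⟨h12, ?_⟩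
    show u 2 = (φ * φ') (u 0)
    rw [h23, h12]
    rfl
  have hfinD : Module.finrank K D = 1 := by
    rw [(tripleKEquiv K α' (α * α')).finrank_eq]
    exact Module.finrank_self K
  have hlenD : moduleLength R (I.ς 3 D) = ((d : ℕ∞) : WithBot ℕ∞) := by
    have hlen := I.length_eq 3 D
    rw [hfinD, mul_one] at hlen
    exact hlen
  have hςD : I.ς 3 D = E :=
    submodule_eq_of_le_of_moduleLength hςD_le_E hlenD (hlenM3 _ _)
  -- D is contained in the swapped copy of `Θa ⊕ ⊤`
  have hDW : D ≤ (Θa.finDSum (⊤ : Submodule K (Fin 1 → K))).map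
      (matVec (S := K) (N := K) (swapMat K₀)) := by
    intro x hx
    rw [mem_map_swapMat_iff, matVec_swapMat_apply]
    obtain ⟨h1, h2⟩ := hx
    exact ⟨h2, trivial⟩
  have hdsum : I.ς 3 (Θa.finDSum (⊤ : Submodule K (Fin 1 → K)))
      = (I.ς 2 Θa).finDSum (⊤ : Submodule R (Fin 1 → M)) := by
    have hh := I.map_dsum 2 1 Θa ⊤
    rwa [htop1] at hh
  have hkey : E ≤ ((I.ς 2 Θa).finDSum (⊤ : Submodule R (Fin 1 → M))).map
      (matVec (S := R) (N := M) (swapMat K₀)) := by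
    calc E = I.ς 3 D := hςD.symm
    _ ≤ I.ς 3 ((Θa.finDSum (⊤ : Submodule K (Fin 1 → K))).map
        (matVec (S := K) (N := K) (swapMat K₀))) := I.mono 3 _ _ hDW
    _ = (I.ς 3 (Θa.finDSum (⊤ : Submodule K (Fin 1 → K)))).map
        (matVec (S := R) (N := M) (swapMat K₀)) :=
      I.equivariant 3 (swapMat K₀) (isUnit_swapMat K₀) _
    _ = _ := by rw [hdsum]
  -- conclude : the graph of `φ * φ'` is contained in `ς 2 Θa`
  have hsub : graphM (φ * φ') ≤ I.ς 2 Θa := by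
    intro v hv
    have hv' : v 1 = (φ * φ') (v 0) := hv
    have hvE : (![v 0, φ' (v 0), v 1]) ∈ E := ⟨rfl, hv'⟩
    have hmem := hkey hvE
    rw [mem_map_swapMat_iff, matVec_swapMat_apply] at hmem
    obtain ⟨h1, -⟩ := hmem
    have h1' : (fun i : Fin 2 => (![v 0, φ' (v 0), v 1]) (sw3 (Fin.castAdd 1 i)))
        ∈ I.ς 2 Θa := h1
    have hfun : (fun i : Fin 2 => (![v 0, φ' (v 0), v 1]) (sw3 (Fin.castAdd 1 i))) = v := by
      funext i
      fin_cases i <;> rfl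
    rwa [hfun] at h1'
  have hlenG : moduleLength R (I.ς 2 Θa) = ((d : ℕ∞) : WithBot ℕ∞) := by
    have hlen := I.length_eq 2 Θa
    have hfr : Module.finrank K Θa = 1 := by
      rw [(graphKEquiv K (α * α')).finrank_eq]
      exact Module.finrank_self K
    rw [hfr, mul_one] at hlen
    exact hlen
  exact (submodule_eq_of_le_of_moduleLength hsub (hlenM2 _) hlenG).symm
end

section
/- Let ς be a 1-inflator on K with target a division ring L. Then the fundamental ring O := R_ς = {a ∈ K : there exists c ∈ L with ς_2(K·(1,a)) = {(x, x·c) : x ∈ L}} is a valuation subring of K; the fundamental ideal I_ς equals the maximal ideal of O (its set of nonunits); and the map sending a ∈ O to the unique c ∈ L with ς_2(K·(1,a)) = {(x, x·c) : x ∈ L} is a K₀-algebra homomorphism O → L with kernel I_ς, inducing an injective K₀-algebra homomorphism from the residue field O/I_ς into L. -/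
/-- The line `{(x, x·c) : x ∈ L}` as a left `L`-subspace of `L² = Fin 2 → L`. -/
def graphL {L : Type*} [DivisionRing L] (c : L) : Submodule L (Fin 2 → L) where
  carrier := {v | v 1 = v 0 * c}
  add_mem' := by
    intro x y hx hy
    simp only [Set.mem_setOf_eq, Pi.add_apply] at *
    rw [hx, hy, add_mul]
  zero_mem' := by simp
  smul_mem' := by
    intro t x hx
    simp only [Set.mem_setOf_eq, Pi.smul_apply, smul_eq_mul] at *
    rw [hx, mul_assoc]

/-- A 1-inflator on `K` with target a division ring `L`. -/
structure OneInflator (K₀ K L : Type*) [Field K₀] [Field K] [Algebra K₀ K]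
    [DivisionRing L] [Algebra K₀ L] where
  ς : ∀ n : ℕ, Submodule K (Fin n → K) → Submodule L (Fin n → L)
  mono : ∀ (n : ℕ) (V W : Submodule K (Fin n → K)), V ≤ W → ς n V ≤ ς n W
  map_dsum : ∀ (n m : ℕ) (V : Submodule K (Fin n → K)) (W : Submodule K (Fin m → K)),
    ς (n + m) (V.finDSum W) = (ς n V).finDSum (ς m W)
  equivariant : ∀ (n : ℕ) (μ : Matrix (Fin n) (Fin n) K₀), IsUnit μ →
    ∀ V : Submodule K (Fin n → K),
      ς n (V.map (matVec (S := K) (N := K) μ)) = (ς n V).map (matVec (S := L) (N := L) μ)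
  finrank_eq : ∀ (n : ℕ) (V : Submodule K (Fin n → K)),
    Module.finrank L (ς n V) = Module.finrank K V

namespace OneInflator

variable {K₀ K L : Type*} [Field K₀] [Field K] [Algebra K₀ K]
  [DivisionRing L] [Algebra K₀ L]

/-- `a ∈ K` specializes to `c ∈ L`. -/
def Specializes (I : OneInflator K₀ K L) (a : K) (c : L) : Prop :=
  I.ς 2 (graphK K a) = graphL c

/-- The fundamental ring of a 1-inflator, as a subset of `K`. -/
def fundSet (I : OneInflator K₀ K L) : Set K :=
  {a | ∃ c : L, I.Specializes a c}

/-- The fundamental ideal of a 1-inflator, as a subset of `K`. -/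
def fundIdealSet (I : OneInflator K₀ K L) : Set K :=
  {a | I.Specializes a 0}

end OneInflator


open Submodule Module

section Basic

lemma mem_finDSum {S N : Type*} [Ring S] [AddCommGroup N] [Module S N] {n m : ℕ}
    {V : Submodule S (Fin n → N)} {W : Submodule S (Fin m → N)} {x : Fin (n+m) → N} :
    x ∈ V.finDSum W ↔ (fun i => x (Fin.castAdd m i)) ∈ V ∧ (fun j => x (Fin.natAdd n j)) ∈ W :=
  Iff.rfl

lemma matVec_apply {K₀ S N : Type*} [CommRing K₀] [Ring S] [AddCommGroup N] [Module S N]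
    [Module K₀ N] [SMulCommClass K₀ S N] {n m : ℕ}
    (μ : Matrix (Fin n) (Fin m) K₀) (x : Fin m → N) (i : Fin n) :
    matVec (S := S) μ x i = ∑ j, μ i j • x j := rfl

variable {K L : Type*} [Field K] [DivisionRing L]

lemma mem_graphK {a : K} {v : Fin 2 → K} : v ∈ graphK K a ↔ v 1 = a * v 0 := Iff.rfl
lemma mem_graphL {c : L} {v : Fin 2 → L} : v ∈ graphL c ↔ v 1 = v 0 * c := Iff.rfl

lemma graphK_eq_span (a : K) : graphK K a = span K {![1, a]} := by
  ext v
  rw [mem_graphK, mem_span_singleton]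
  constructor
  · intro h
    refine ⟨v 0, ?_⟩
    funext i
    fin_cases i <;> simp [h, mul_comm]
  · rintro ⟨t, rfl⟩
    simp [mul_comm]

lemma graphL_eq_span (c : L) : graphL c = span L {![1, c]} := by
  ext v
  rw [mem_graphL, mem_span_singleton]
  constructor
  · intro h
    refine ⟨v 0, ?_⟩
    funext i
    fin_cases i <;> simp [h]
  · rintro ⟨t, rfl⟩
    simp

lemma vec2_ne_zero (c : L) : ![1, c] ≠ 0 := by
  intro h
  have := congrFun h 0
  simp at this

lemma finrank_graphK (a : K) : finrank K (graphK K a) = 1 := by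
  rw [graphK_eq_span, finrank_span_singleton (vec2_ne_zero a)]

lemma graphL_injective {c c' : L} (h : graphL c = graphL c') : c = c' := by
  have h1 : (![1, c] : Fin 2 → L) ∈ graphL c := by simp [mem_graphL]
  rw [h] at h1
  rw [mem_graphL] at h1
  simpa using h1

/-- A finrank-1 submodule equals the span of any of its nonzero elements. -/
lemma eq_span_of_finrank_one {n : ℕ} {X : Submodule L (Fin n → L)}
    (hX : finrank L X = 1) {w : Fin n → L} (hw : w ∈ X) (hw0 : w ≠ 0) :
    X = span L {w} := by
  have hle : span L {w} ≤ X := by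
    rw [span_le, Set.singleton_subset_iff]; exact hw
  exact (Submodule.eq_of_le_of_finrank_eq hle (by rw [finrank_span_singleton hw0, hX])).symm

end Basic
section Inflator

variable {K₀ K L : Type*} [Field K₀] [Field K] [Algebra K₀ K]
  [DivisionRing L] [Algebra K₀ L] (I : OneInflator K₀ K L)

lemma ς_top_one : I.ς 1 (⊤ : Submodule K (Fin 1 → K)) = ⊤ := by
  apply Submodule.eq_top_of_finrank_eq
  rw [I.finrank_eq, finrank_top]
  simp [Module.finrank_fin_fun]

lemma ς_bot_one : I.ς 1 (⊥ : Submodule K (Fin 1 → K)) = ⊥ := by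
  rw [← Submodule.finrank_eq_zero (R := L)]
  rw [I.finrank_eq]
  simp

lemma finrank_ς_graphK (a : K) : finrank L (I.ς 2 (graphK K a)) = 1 := by
  rw [I.finrank_eq, finrank_graphK]

lemma line_spec {a : K} {e : L} (h : (![1, e] : Fin 2 → L) ∈ I.ς 2 (graphK K a)) :
    I.Specializes a e := by
  unfold OneInflator.Specializes
  rw [eq_span_of_finrank_one (finrank_ς_graphK I a) h (vec2_ne_zero e), graphL_eq_span]

lemma spec_unique {a : K} {c c' : L} (h : I.Specializes a c) (h' : I.Specializes a c') :
    c = c' := graphL_injective (h.symm.trans h')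

lemma graphK_zero_eq : graphK K 0 =
    (⊤ : Submodule K (Fin 1 → K)).finDSum (⊥ : Submodule K (Fin 1 → K)) := by
  ext v
  rw [mem_graphK, mem_finDSum]
  constructor
  · intro h
    refine ⟨trivial, ?_⟩
    rw [Submodule.mem_bot]
    funext j
    fin_cases j
    simpa using h
  · rintro ⟨-, h⟩
    rw [Submodule.mem_bot] at h
    have := congrFun h 0
    simpa using this

lemma graphL_zero_eq : graphL (0 : L) =
    (⊤ : Submodule L (Fin 1 → L)).finDSum (⊥ : Submodule L (Fin 1 → L)) := by
  ext v
  rw [mem_graphL, mem_finDSum]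
  constructor
  · intro h
    refine ⟨trivial, ?_⟩
    rw [Submodule.mem_bot]
    funext j
    fin_cases j
    simpa using h
  · rintro ⟨-, h⟩
    rw [Submodule.mem_bot] at h
    have := congrFun h 0
    simpa using this

lemma spec_zero : I.Specializes 0 0 := by
  unfold OneInflator.Specializes
  rw [graphK_zero_eq, graphL_zero_eq]
  have h := I.map_dsum 1 1 ⊤ ⊥
  rw [ς_top_one, ς_bot_one] at h
  exact h

end Inflator
section Matrices

lemma map_span_singleton {R M M' : Type*} [Ring R] [AddCommGroup M] [Module R M]
    [AddCommGroup M'] [Module R M'] (f : M →ₗ[R] M') (v : M) :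
    (span R {v}).map f = span R {f v} := by
  rw [Submodule.map_span, Set.image_singleton]

variable {K₀ K L : Type*} [Field K₀] [Field K] [Algebra K₀ K]
  [DivisionRing L] [Algebra K₀ L] (I : OneInflator K₀ K L)

lemma matVec2_apply {S N : Type*} [Ring S] [AddCommGroup N] [Module S N]
    [Module K₀ N] [SMulCommClass K₀ S N]
    (μ : Matrix (Fin 2) (Fin 2) K₀) (x y : N) :
    matVec (S := S) μ ![x, y] = ![μ 0 0 • x + μ 0 1 • y, μ 1 0 • x + μ 1 1 • y] := by
  funext i
  fin_cases i <;> simp [matVec_apply, Fin.sum_univ_two]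

/-- The swap matrix. -/
def τmat (K₀ : Type*) [Field K₀] : Matrix (Fin 2) (Fin 2) K₀ := !![0, 1; 1, 0]

lemma τmat_unit : IsUnit (τmat K₀) := by
  rw [Matrix.isUnit_iff_isUnit_det]
  simp [τmat, Matrix.det_fin_two_of, isUnit_iff_ne_zero]

lemma matVec_τmat {S N : Type*} [Ring S] [AddCommGroup N] [Module S N]
    [Module K₀ N] [SMulCommClass K₀ S N] (x y : N) :
    matVec (S := S) (τmat K₀) ![x, y] = ![y, x] := by
  rw [matVec2_apply]
  simp [τmat]

lemma spec_inv {a : K} {c : L} (ha : a ≠ 0) (hc : c ≠ 0) (h : I.Specializes a c) :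
    I.Specializes a⁻¹ c⁻¹ := by
  have heq := I.equivariant 2 (τmat K₀) τmat_unit (graphK K a)
  have hK : (graphK K a).map (matVec (S := K) (τmat K₀)) = graphK K a⁻¹ := by
    rw [graphK_eq_span, map_span_singleton, matVec_τmat, graphK_eq_span]
    have : (![a, 1] : Fin 2 → K) = a • ![1, a⁻¹] := by
      funext i; fin_cases i <;> simp [ha]
    rw [this, span_singleton_smul_eq (IsUnit.mk0 a ha) _]
  have hL : (graphL c).map (matVec (S := L) (τmat K₀)) = graphL c⁻¹ := by
    rw [graphL_eq_span, map_span_singleton, matVec_τmat, graphL_eq_span]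
    have : (![c, 1] : Fin 2 → L) = c • ![1, c⁻¹] := by
      funext i; fin_cases i <;> simp [hc]
    rw [this, span_singleton_smul_eq (IsUnit.mk0 c hc) _]
  unfold OneInflator.Specializes at h ⊢
  rw [hK, h, hL] at heq
  exact heq

lemma classify (a : K) :
    a ∈ I.fundSet ∨ I.ς 2 (graphK K a) = span L {![0, 1]} := by
  have h1 : finrank L (I.ς 2 (graphK K a)) = 1 := finrank_ς_graphK I a
  have hbot : I.ς 2 (graphK K a) ≠ ⊥ := by
    intro h
    rw [h] at h1
    simp at h1
  obtain ⟨u, hu, hu0⟩ := Submodule.ne_bot_iff _ |>.mp hbot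
  by_cases h0 : u 0 = 0
  · right
    have h10 : u 1 ≠ 0 := by
      intro h10
      apply hu0
      funext i; fin_cases i <;> simp [h0, h10]
    have hmem : (![0, 1] : Fin 2 → L) ∈ I.ς 2 (graphK K a) := by
      have : (![0, 1] : Fin 2 → L) = (u 1)⁻¹ • u := by
        funext i; fin_cases i <;> simp [h0, inv_mul_cancel₀ h10]
      rw [this]
      exact Submodule.smul_mem _ _ hu
    exact eq_span_of_finrank_one h1 hmem (by
      intro h
      have := congrFun h 1
      simp at this)
  · left
    refine ⟨(u 0)⁻¹ * u 1, line_spec I ?_⟩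
    have : (![1, (u 0)⁻¹ * u 1] : Fin 2 → L) = (u 0)⁻¹ • u := by
      funext i; fin_cases i <;> simp [inv_mul_cancel₀ h0]
    rw [this]
    exact Submodule.smul_mem _ _ hu

lemma inv_spec_zero {a : K} (ha : a ≠ 0) (hnot : a ∉ I.fundSet) :
    I.Specializes a⁻¹ 0 := by
  rcases classify I a with h | h
  · exact absurd h hnot
  have heq := I.equivariant 2 (τmat K₀) τmat_unit (graphK K a)
  have hK : (graphK K a).map (matVec (S := K) (τmat K₀)) = graphK K a⁻¹ := by
    rw [graphK_eq_span, map_span_singleton, matVec_τmat, graphK_eq_span]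
    have : (![a, 1] : Fin 2 → K) = a • ![1, a⁻¹] := by
      funext i; fin_cases i <;> simp [ha]
    rw [this, span_singleton_smul_eq (IsUnit.mk0 a ha) _]
  rw [hK, h, map_span_singleton, matVec_τmat] at heq
  apply line_spec I
  rw [heq]
  have : (![1, (0:L)] : Fin 2 → L) = ![1, 0] := rfl
  rw [this]
  exact Submodule.mem_span_singleton_self _

lemma spec_algebraMap (q : K₀) :
    I.Specializes (algebraMap K₀ K q) (algebraMap K₀ L q) := by
  set ν : Matrix (Fin 2) (Fin 2) K₀ := !![1, 0; q, 1] with hν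
  have hunit : IsUnit ν := by
    rw [Matrix.isUnit_iff_isUnit_det]
    simp [hν, Matrix.det_fin_two_of]
  have heq := I.equivariant 2 ν hunit (graphK K 0)
  have hK : (graphK K 0).map (matVec (S := K) ν) = graphK K (algebraMap K₀ K q) := by
    rw [graphK_eq_span, map_span_singleton, matVec2_apply, graphK_eq_span]
    congr 2
    funext i
    fin_cases i <;> simp [hν, Algebra.algebraMap_eq_smul_one]
  have hL : (graphL (0:L)).map (matVec (S := L) ν) = graphL (algebraMap K₀ L q) := by
    rw [graphL_eq_span, map_span_singleton, matVec2_apply, graphL_eq_span]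
    congr 2
    funext i
    fin_cases i <;> simp [hν, Algebra.algebraMap_eq_smul_one]
  have h0 := spec_zero I
  unfold OneInflator.Specializes at h0 ⊢
  rw [hK, h0, hL] at heq
  exact heq

end Matrices
section ThreeDim

variable {K₀ K L : Type*} [Field K₀] [Field K] [Algebra K₀ K]
  [DivisionRing L] [Algebra K₀ L] (I : OneInflator K₀ K L)

/-- The permutation matrix swapping coordinates 1 and 2. -/
def σmat (K₀ : Type*) [Field K₀] : Matrix (Fin 3) (Fin 3) K₀ :=
  !![1, 0, 0; 0, 0, 1; 0, 1, 0]

lemma σmat_unit : IsUnit (σmat K₀) := by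
  rw [Matrix.isUnit_iff_isUnit_det]
  have : (σmat (K₀ := K₀)).det = -1 := by
    simp [σmat, Matrix.det_fin_three]
  rw [this]
  exact isUnit_one.neg

lemma matVec_σmat {S N : Type*} [Ring S] [AddCommGroup N] [Module S N]
    [Module K₀ N] [SMulCommClass K₀ S N] (x : Fin 3 → N) :
    matVec (S := S) (σmat K₀) x = ![x 0, x 2, x 1] := by
  funext i
  fin_cases i <;> simp [matVec_apply, Fin.sum_univ_three, σmat]

/-- The elementary addition matrix. -/
def αmat (K₀ : Type*) [Field K₀] : Matrix (Fin 3) (Fin 3) K₀ :=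
  !![1, 0, 0; 0, 1, 1; 0, 0, 1]

lemma αmat_unit : IsUnit (αmat K₀) := by
  rw [Matrix.isUnit_iff_isUnit_det]
  have : (αmat K₀).det = 1 := by
    simp [αmat, Matrix.det_fin_three, Matrix.vecHead, Matrix.vecTail]
  rw [this]
  exact isUnit_one

lemma matVec_αmat {S N : Type*} [Ring S] [AddCommGroup N] [Module S N]
    [Module K₀ N] [SMulCommClass K₀ S N] (x : Fin 3 → N) :
    matVec (S := S) (αmat K₀) x = ![x 0, x 1 + x 2, x 2] := by
  funext i
  fin_cases i <;> simp [matVec_apply, Fin.sum_univ_three, αmat]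

lemma ς_P01_gen (d : K) :
    I.ς 3 ((graphK K d).finDSum (⊤ : Submodule K (Fin 1 → K))) =
      (I.ς 2 (graphK K d)).finDSum (⊤ : Submodule L (Fin 1 → L)) := by
  have h := I.map_dsum 2 1 (graphK K d) ⊤
  rw [ς_top_one] at h
  exact h

lemma ς_P12_gen (d : K) :
    I.ς 3 ((⊤ : Submodule K (Fin 1 → K)).finDSum (graphK K d)) =
      (⊤ : Submodule L (Fin 1 → L)).finDSum (I.ς 2 (graphK K d)) := by
  have h := I.map_dsum 1 2 ⊤ (graphK K d)
  rw [ς_top_one] at h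
  exact h

lemma ς_Q_gen (d : K) :
    I.ς 3 (((graphK K d).finDSum (⊤ : Submodule K (Fin 1 → K))).map
        (matVec (S := K) (σmat K₀))) =
      ((I.ς 2 (graphK K d)).finDSum (⊤ : Submodule L (Fin 1 → L))).map
        (matVec (S := L) (σmat K₀)) := by
  rw [I.equivariant 3 (σmat K₀) σmat_unit, ς_P01_gen]

lemma vec3_ne_zero {M : Type*} [AddCommGroup M] [One M] (h1 : (1 : M) ≠ 0)
    (a b : M) : ![1, a, b] ≠ 0 := by
  intro h
  exact h1 (by simpa using congrFun h 0)

/-- The value of `ς` on a line `K·(1,a,b)` where both `a` and `b` specialize. -/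
lemma ς_line3 {a b : K} {ca cb : L} (ha : I.Specializes a ca) (hb : I.Specializes b cb) :
    I.ς 3 (span K {![1, a, b]}) = span L {![1, ca, cb]} := by
  -- inclusion into the plane {v₁ = a v₀}
  have hsub1 : span K {![1, a, b]} ≤ (graphK K a).finDSum (⊤ : Submodule K (Fin 1 → K)) := by
    rw [span_le, Set.singleton_subset_iff]
    refine ⟨?_, trivial⟩
    rw [mem_graphK]
    show (![1, a, b] : Fin 3 → K) 1 = a * (![1, a, b] : Fin 3 → K) 0
    simp
  -- inclusion into the plane {v₂ = b v₀}
  have hsub2 : span K {![1, a, b]} ≤ ((graphK K b).finDSum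
      (⊤ : Submodule K (Fin 1 → K))).map (matVec (S := K) (σmat K₀)) := by
    rw [span_le, Set.singleton_subset_iff]
    refine ⟨![1, b, a], ⟨?_, trivial⟩, ?_⟩
    · rw [mem_graphK]
      show (![1, b, a] : Fin 3 → K) 1 = b * (![1, b, a] : Fin 3 → K) 0
      simp
    · rw [matVec_σmat]
      funext i
      fin_cases i <;> rfl
  have hle1 := (I.mono 3 _ _ hsub1).trans (le_of_eq (ς_P01_gen I a))
  have hle2 := (I.mono 3 _ _ hsub2).trans (le_of_eq (ς_Q_gen I b))
  rw [ha] at hle1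
  rw [hb] at hle2
  -- get a nonzero element
  have h1 : finrank L (I.ς 3 (span K {![1, a, b]})) = 1 := by
    rw [I.finrank_eq, finrank_span_singleton (vec3_ne_zero one_ne_zero a b)]
  have hbot : I.ς 3 (span K {![1, a, b]}) ≠ ⊥ := by
    intro h; rw [h] at h1; simp at h1
  obtain ⟨u, hu, hu0⟩ := Submodule.ne_bot_iff _ |>.mp hbot
  have hu1 : u 1 = u 0 * ca := by
    have := (hle1 hu).1
    rw [mem_graphL] at this
    exact this
  have hu2 : u 2 = u 0 * cb := by
    obtain ⟨x, ⟨hx1, -⟩, hx2⟩ := hle2 hu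
    rw [mem_graphL] at hx1
    have hx1' : x 1 = x 0 * cb := hx1
    rw [matVec_σmat] at hx2
    have e0 : x 0 = u 0 := by simpa using congrFun hx2 0
    have e2 : x 1 = u 2 := by simpa using congrFun hx2 2
    rw [← e2, hx1', e0]
  have h00 : u 0 ≠ 0 := by
    intro h0
    apply hu0
    funext i
    fin_cases i <;> simp [h0, hu1, hu2]
  have hmem : (![1, ca, cb] : Fin 3 → L) ∈ I.ς 3 (span K {![1, a, b]}) := by
    have : (![1, ca, cb] : Fin 3 → L) = (u 0)⁻¹ • u := by
      funext i
      fin_cases i <;>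
        simp [hu1, hu2, inv_mul_cancel₀ h00, ← mul_assoc]
    rw [this]
    exact Submodule.smul_mem _ _ hu
  exact eq_span_of_finrank_one h1 hmem (vec3_ne_zero one_ne_zero ca cb)

end ThreeDim
section AddMul

variable {K₀ K L : Type*} [Field K₀] [Field K] [Algebra K₀ K]
  [DivisionRing L] [Algebra K₀ L] (I : OneInflator K₀ K L)

lemma ς_line3' {a b : K} {ca cb : L} (ha : I.Specializes a ca) (hb : I.Specializes b cb) :
    I.ς 3 (span K {![1, a, a * b]}) = span L {![1, ca, ca * cb]} := by
  have hsub1 : span K {![1, a, a * b]} ≤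
      (graphK K a).finDSum (⊤ : Submodule K (Fin 1 → K)) := by
    rw [span_le, Set.singleton_subset_iff]
    refine ⟨?_, trivial⟩
    rw [mem_graphK]
    show (![1, a, a * b] : Fin 3 → K) 1 = a * (![1, a, a * b] : Fin 3 → K) 0
    simp
  have hsub2 : span K {![1, a, a * b]} ≤
      (⊤ : Submodule K (Fin 1 → K)).finDSum (graphK K b) := by
    rw [span_le, Set.singleton_subset_iff]
    refine ⟨trivial, ?_⟩
    rw [mem_graphK]
    show (![1, a, a * b] : Fin 3 → K) 2 = b * (![1, a, a * b] : Fin 3 → K) 1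
    simp [mul_comm]
  have hle1 := (I.mono 3 _ _ hsub1).trans (le_of_eq (ς_P01_gen I a))
  have hle2 := (I.mono 3 _ _ hsub2).trans (le_of_eq (ς_P12_gen I b))
  rw [ha] at hle1
  rw [hb] at hle2
  have h1 : finrank L (I.ς 3 (span K {![1, a, a * b]})) = 1 := by
    rw [I.finrank_eq, finrank_span_singleton (vec3_ne_zero one_ne_zero a (a * b))]
  have hbot : I.ς 3 (span K {![1, a, a * b]}) ≠ ⊥ := by
    intro h; rw [h] at h1; simp at h1
  obtain ⟨u, hu, hu0⟩ := Submodule.ne_bot_iff _ |>.mp hbot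
  have hu1 : u 1 = u 0 * ca := (hle1 hu).1
  have hu2 : u 2 = u 1 * cb := (hle2 hu).2
  have h00 : u 0 ≠ 0 := by
    intro h0
    apply hu0
    funext i
    fin_cases i <;> simp [h0, hu1, hu2]
  have hmem : (![1, ca, ca * cb] : Fin 3 → L) ∈ I.ς 3 (span K {![1, a, a * b]}) := by
    have : (![1, ca, ca * cb] : Fin 3 → L) = (u 0)⁻¹ • u := by
      funext i
      fin_cases i <;>
        simp [hu1, hu2, inv_mul_cancel₀ h00, ← mul_assoc]
    rw [this]
    exact Submodule.smul_mem _ _ hu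
  exact eq_span_of_finrank_one h1 hmem (vec3_ne_zero one_ne_zero ca (ca * cb))

lemma spec_mul {a b : K} {ca cb : L} (ha : I.Specializes a ca) (hb : I.Specializes b cb) :
    I.Specializes (a * b) (ca * cb) := by
  have hς := ς_line3' I ha hb
  have hsubQ : span K {![1, a, a * b]} ≤ ((graphK K (a * b)).finDSum
      (⊤ : Submodule K (Fin 1 → K))).map (matVec (S := K) (σmat K₀)) := by
    rw [span_le, Set.singleton_subset_iff]
    refine ⟨![1, a * b, a], ⟨?_, trivial⟩, ?_⟩
    · rw [mem_graphK]
      show (![1, a * b, a] : Fin 3 → K) 1 = (a * b) * (![1, a * b, a] : Fin 3 → K) 0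
      simp
    · rw [matVec_σmat]
      funext i
      fin_cases i <;> rfl
  have hleQ := (I.mono 3 _ _ hsubQ).trans (le_of_eq (ς_Q_gen I (a * b)))
  have hwmem : (![1, ca, ca * cb] : Fin 3 → L) ∈ I.ς 3 (span K {![1, a, a * b]}) := by
    rw [hς]; exact Submodule.mem_span_singleton_self _
  obtain ⟨x, ⟨hx1, -⟩, hx2⟩ := hleQ hwmem
  rw [matVec_σmat] at hx2
  have e0 : x 0 = 1 := by simpa using congrFun hx2 0
  have e1 : x 1 = ca * cb := by simpa using congrFun hx2 2
  apply line_spec I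
  have : (![1, ca * cb] : Fin 2 → L) = fun i => x (Fin.castAdd 1 i) := by
    funext i
    fin_cases i
    · exact e0.symm
    · exact e1.symm
  rw [this]
  exact hx1

lemma spec_add {a b : K} {ca cb : L} (ha : I.Specializes a ca) (hb : I.Specializes b cb) :
    I.Specializes (a + b) (ca + cb) := by
  have hς := ς_line3 I ha hb
  have hmapK : (span K {![1, a, b]}).map (matVec (S := K) (αmat K₀)) =
      span K {![1, a + b, b]} := by
    rw [map_span_singleton, matVec_αmat]
    have hv : (![(![1, a, b] : Fin 3 → K) 0, (![1, a, b] : Fin 3 → K) 1 +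
        (![1, a, b] : Fin 3 → K) 2, (![1, a, b] : Fin 3 → K) 2]) = ![1, a + b, b] := by
      funext i; fin_cases i <;> simp
    rw [hv]
  have hmapL : (span L {![1, ca, cb]}).map (matVec (S := L) (αmat K₀)) =
      span L {![1, ca + cb, cb]} := by
    rw [map_span_singleton, matVec_αmat]
    have hv : (![(![1, ca, cb] : Fin 3 → L) 0, (![1, ca, cb] : Fin 3 → L) 1 +
        (![1, ca, cb] : Fin 3 → L) 2, (![1, ca, cb] : Fin 3 → L) 2]) = ![1, ca + cb, cb] := by
      funext i; fin_cases i <;> simp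
    rw [hv]
  have heq := I.equivariant 3 (αmat K₀) αmat_unit (span K {![1, a, b]})
  rw [hmapK, hς, hmapL] at heq
  have hsub : span K {![1, a + b, b]} ≤
      (graphK K (a + b)).finDSum (⊤ : Submodule K (Fin 1 → K)) := by
    rw [span_le, Set.singleton_subset_iff]
    refine ⟨?_, trivial⟩
    rw [mem_graphK]
    show (![1, a + b, b] : Fin 3 → K) 1 = (a + b) * (![1, a + b, b] : Fin 3 → K) 0
    simp
  have hle := (I.mono 3 _ _ hsub).trans (le_of_eq (ς_P01_gen I (a + b)))
  rw [heq] at hle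
  have hwmem : (![1, ca + cb, cb] : Fin 3 → L) ∈ span L {![1, ca + cb, cb]} :=
    Submodule.mem_span_singleton_self _
  have hx1 := (hle hwmem).1
  apply line_spec I
  have : (![1, ca + cb] : Fin 2 → L) =
      fun i => (![1, ca + cb, cb] : Fin 3 → L) (Fin.castAdd 1 i) := by
    funext i
    fin_cases i <;> rfl
  rw [this]
  exact hx1

end AddMul

/-- For a 1-inflator `ς` on `K` with target a division ring `L`: the fundamental ring
is a valuation subring of `K`; the fundamental ideal is its set of nonunits (its
maximal ideal); and the generalized residue map is a `K₀`-algebra homomorphism to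
`L` with kernel the fundamental ideal, inducing an injective `K₀`-algebra
homomorphism from the residue field into `L`. -/
theorem oneInflator_fundamental_ring_valuation
    {K₀ K L : Type*} [Field K₀] [Infinite K₀] [Field K] [Algebra K₀ K]
    [DivisionRing L] [Algebra K₀ L] (I : OneInflator K₀ K L) :
    (∃ O : ValuationSubring K, (O : Set K) = I.fundSet) ∧
    (I.fundIdealSet = {a | a ∈ I.fundSet ∧ ¬∃ b ∈ I.fundSet, a * b = 1}) ∧
    (∃ res : K → L,
      (∀ a ∈ I.fundSet, I.Specializes a (res a)) ∧
      (∀ a ∈ I.fundSet, ∀ c : L, I.Specializes a c → c = res a) ∧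
      (∀ a ∈ I.fundSet, ∀ b ∈ I.fundSet, res (a + b) = res a + res b) ∧
      (∀ a ∈ I.fundSet, ∀ b ∈ I.fundSet, res (a * b) = res a * res b) ∧
      res 1 = 1 ∧
      (∀ q : K₀, res (algebraMap K₀ K q) = algebraMap K₀ L q) ∧
      (∀ a ∈ I.fundSet, (res a = 0 ↔ a ∈ I.fundIdealSet)) ∧
      (∀ a ∈ I.fundSet, ∀ b ∈ I.fundSet, res a = res b → a - b ∈ I.fundIdealSet)) := by
  classical
  have spec_one : I.Specializes 1 1 := by
    simpa using spec_algebraMap I 1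
  have spec_neg_one : I.Specializes (-1 : K) (-1 : L) := by
    simpa using spec_algebraMap I (-1)
  have hzero : (0 : K) ∈ I.fundSet := ⟨0, spec_zero I⟩
  have hone : (1 : K) ∈ I.fundSet := ⟨1, spec_one⟩
  have haddF : ∀ a ∈ I.fundSet, ∀ b ∈ I.fundSet, a + b ∈ I.fundSet := by
    rintro a ⟨ca, ha⟩ b ⟨cb, hb⟩
    exact ⟨ca + cb, spec_add I ha hb⟩
  have hmulF : ∀ a ∈ I.fundSet, ∀ b ∈ I.fundSet, a * b ∈ I.fundSet := by
    rintro a ⟨ca, ha⟩ b ⟨cb, hb⟩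
    exact ⟨ca * cb, spec_mul I ha hb⟩
  have hnegF : ∀ a ∈ I.fundSet, -a ∈ I.fundSet := by
    rintro a ⟨ca, ha⟩
    exact ⟨-ca, by simpa [neg_one_mul] using spec_mul I spec_neg_one ha⟩
  -- the ideal-nonunit characterization
  have hchar : I.fundIdealSet = {a | a ∈ I.fundSet ∧ ¬∃ b ∈ I.fundSet, a * b = 1} := by
    ext a
    constructor
    · intro (h : I.Specializes a 0)
      refine ⟨⟨0, h⟩, ?_⟩
      rintro ⟨b, ⟨cb, hb⟩, hab⟩
      have h1 : I.Specializes 1 0 := by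
        have := spec_mul I h hb
        rw [hab, zero_mul] at this
        exact this
      exact one_ne_zero (spec_unique I spec_one h1)
    · rintro ⟨⟨c, hc⟩, hnu⟩
      show I.Specializes a 0
      by_cases hc0 : c = 0
      · rwa [hc0] at hc
      exfalso
      have ha0 : a ≠ 0 := by
        rintro rfl
        exact hc0 (spec_unique I hc (spec_zero I))
      exact hnu ⟨a⁻¹, ⟨c⁻¹, spec_inv I ha0 hc0 hc⟩, mul_inv_cancel₀ ha0⟩
  refine ⟨?_, hchar, ?_⟩
  · -- the valuation subring
    refine ⟨{ carrier := I.fundSet,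
              one_mem' := hone,
              zero_mem' := hzero,
              mul_mem' := fun {a b} ha hb => hmulF a ha b hb,
              add_mem' := fun {a b} ha hb => haddF a ha b hb,
              neg_mem' := fun {a} ha => hnegF a ha,
              mem_or_inv_mem' := ?_ }, rfl⟩
    intro x
    by_cases hx : x ∈ I.fundSet
    · exact Or.inl hx
    · right
      have hx0 : x ≠ 0 := by rintro rfl; exact hx hzero
      exact ⟨0, inv_spec_zero I hx0 hx⟩
  · -- the residue map
    set res : K → L := fun a => if h : a ∈ I.fundSet then h.choose else 0 with hresdef
    have hres_spec : ∀ a ∈ I.fundSet, I.Specializes a (res a) := by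
      intro a ha
      simp only [hresdef, dif_pos ha]
      exact ha.choose_spec
    have huniq : ∀ a ∈ I.fundSet, ∀ c : L, I.Specializes a c → c = res a :=
      fun a ha c hc => spec_unique I hc (hres_spec a ha)
    refine ⟨res, hres_spec, huniq, ?_, ?_, ?_, ?_, ?_, ?_⟩
    · intro a ha b hb
      exact (huniq _ (haddF a ha b hb) _
        (spec_add I (hres_spec a ha) (hres_spec b hb))).symm
    · intro a ha b hb
      exact (huniq _ (hmulF a ha b hb) _
        (spec_mul I (hres_spec a ha) (hres_spec b hb))).symm
    · exact (huniq 1 hone 1 spec_one).symm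
    · intro q
      exact (huniq _ ⟨_, spec_algebraMap I q⟩ _ (spec_algebraMap I q)).symm
    · intro a ha
      constructor
      · intro h
        have := hres_spec a ha
        rw [h] at this
        exact this
      · intro h
        exact (huniq a ha 0 h).symm
    · intro a ha b hb hab
      have h1 := spec_add I (hres_spec a ha) (spec_mul I spec_neg_one (hres_spec b hb))
      have e1 : a + (-1) * b = a - b := by ring
      have e2 : res a + (-1) * res b = 0 := by
        rw [neg_one_mul, hab, add_neg_cancel]
      rw [e1, e2] at h1
      exact h1
end
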